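/- arXiv:2203.02581 — 5 statements merged into one kernel-verified Lean document; each statement's English description precedes it below -/
import Mathlib

section
/- Let ℙ be a forcing notion and let λ be a regular cardinal with λ > 𝔥(ℙ). If ⟨A_ξ : ξ < λ⟩ is a base matrix for ℙ of height λ, then there is a maximal branch of the matrix which is not cofinal (i.e., a maximal branch of length strictly less than λ). -/
universe u

section ForcingDefs

variable {P : Type u} [Preorder P]

/-- Two conditions of a forcing notion are compatible if they have a common lower bound. -/
def Compat (p q : P) : Prop := ∃ r : P, r ≤ p ∧ r ≤ q

/-- A maximal antichain: a set of pairwise incompatible conditions such that every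
condition is compatible with some element of the set. -/
def MaxAntichain (A : Set P) : Prop :=
  (∀ p ∈ A, ∀ q ∈ A, p ≠ q → ¬ Compat p q) ∧ ∀ p : P, ∃ a ∈ A, Compat p a

/-- `B` refines `A` if every element of `B` lies below some element of `A`. -/
def Refines (B A : Set P) : Prop := ∀ b ∈ B, ∃ a ∈ A, b ≤ a

/-- `P` is `κ`-distributive: every family of `κ` many maximal antichains has a
common refinement. -/
def Distributive (P : Type u) [Preorder P] (κ : Cardinal.{u}) : Prop :=
  ∀ (ι : Type u) (A : ι → Set P), Cardinal.mk ι = κ →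
    (∀ i, MaxAntichain (A i)) →
    ∃ B : Set P, MaxAntichain B ∧ ∀ i, Refines B (A i)

/-- The distributivity number `𝔥(P)`: the least cardinal `κ` such that `P` is not
`κ`-distributive. -/
noncomputable def hdist (P : Type u) [Preorder P] : Cardinal.{u} :=
  sInf {κ : Cardinal.{u} | ¬ Distributive P κ}

/-- A distributivity matrix for `P` of height `lam` (an ordinal, typically `λ.ord`
for a cardinal `λ`): a refining sequence of maximal antichains without common
refinement. -/
def IsDistribMatrix (P : Type u) [Preorder P] (lam : Ordinal.{u})
    (A : Ordinal.{u} → Set P) : Prop :=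
  (∀ ξ, ξ < lam → MaxAntichain (A ξ)) ∧
  (∀ ξ η : Ordinal.{u}, ξ ≤ η → η < lam → Refines (A η) (A ξ)) ∧
  ¬ ∃ B : Set P, MaxAntichain B ∧ ∀ ξ, ξ < lam → Refines B (A ξ)

/-- A base matrix: a distributivity matrix whose union is dense. -/
def IsBaseMatrix (P : Type u) [Preorder P] (lam : Ordinal.{u})
    (A : Ordinal.{u} → Set P) : Prop :=
  IsDistribMatrix P lam A ∧ ∀ p : P, ∃ ξ, ξ < lam ∧ ∃ a ∈ A ξ, a ≤ p

/-- A branch of the matrix `A` of length `δ`: a decreasing sequence meeting each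
level below `δ`. -/
def IsBranch {P : Type u} [Preorder P] (A : Ordinal.{u} → Set P) (δ : Ordinal.{u})
    (f : Ordinal.{u} → P) : Prop :=
  (∀ ξ, ξ < δ → f ξ ∈ A ξ) ∧
  ∀ ξ η : Ordinal.{u}, ξ ≤ η → η < δ → f η ≤ f ξ

/-- A maximal branch of a matrix of height `lam`: a branch which no branch of the
matrix strictly extends. -/
def IsMaximalBranch {P : Type u} [Preorder P] (A : Ordinal.{u} → Set P)
    (lam δ : Ordinal.{u}) (f : Ordinal.{u} → P) : Prop :=
  δ ≤ lam ∧ IsBranch A δ f ∧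
  ¬ ∃ (δ' : Ordinal.{u}) (g : Ordinal.{u} → P),
      δ < δ' ∧ δ' ≤ lam ∧ IsBranch A δ' g ∧ ∀ ξ, ξ < δ → g ξ = f ξ

end ForcingDefs


section AuxProof

variable {P : Type u} [PartialOrder P] [Nonempty P]

omit [Nonempty P] in
lemma ac_unique {A : Set P} (hA : MaxAntichain A) {a a' r : P}
    (ha : a ∈ A) (ha' : a' ∈ A) (h1 : r ≤ a) (h2 : r ≤ a') : a = a' := by
  by_contra hne
  exact hA.1 a ha a' ha' hne ⟨r, h1, h2⟩

lemma cone_branch (lo : Ordinal.{u}) (A : Ordinal.{u} → Set P)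
    (hMA : ∀ ξ, ξ < lo → MaxAntichain (A ξ))
    (hRef : ∀ ξ η, ξ ≤ η → η < lo → Refines (A η) (A ξ))
    {J : Type u} [Nonempty J] (cc : J → P) (ζζ : J → Ordinal.{u})
    (hζ : ∀ j, ζζ j < lo) (hcA : ∀ j, cc j ∈ A (ζζ j))
    (hcomp : ∀ j k, cc j ≤ cc k ∨ cc k ≤ cc j) :
    ∃ f : Ordinal.{u} → P, IsBranch A (⨆ j, ζζ j + 1) f ∧ ∀ j, f (ζζ j) = cc j := by
  classical
  set δ := ⨆ j, ζζ j + 1 with hδdef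
  have hbdd : BddAbove (Set.range fun j => ζζ j + 1) := Ordinal.bddAbove_range _
  have hδlo : δ ≤ lo := ciSup_le fun j => by
    rw [Ordinal.add_one_eq_succ]
    exact Order.succ_le_of_lt (hζ j)
  have hex : ∀ η, η < δ → ∃ a, a ∈ A η ∧ ∃ j, η ≤ ζζ j ∧ cc j ≤ a := by
    intro η hη
    obtain ⟨j, hj⟩ := (lt_ciSup_iff hbdd).1 hη
    have hηj : η ≤ ζζ j := by
      rw [Ordinal.add_one_eq_succ, Order.lt_succ_iff] at hj
      exact hj
    obtain ⟨a, haA, hle⟩ := hRef η (ζζ j) hηj (hζ j) (cc j) (hcA j)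
    exact ⟨a, haA, j, hηj, hle⟩
  have huniq : ∀ η, η < lo → ∀ a a',
      (a ∈ A η ∧ ∃ j, η ≤ ζζ j ∧ cc j ≤ a) →
      (a' ∈ A η ∧ ∃ j, η ≤ ζζ j ∧ cc j ≤ a') → a = a' := by
    rintro η hη a a' ⟨ha, j, hj, hja⟩ ⟨ha', k, hk, hka'⟩
    rcases hcomp j k with h | h
    · exact ac_unique (hMA η hη) ha ha' hja (h.trans hka')
    · exact ac_unique (hMA η hη) ha ha' (h.trans hja) hka'
  set f : Ordinal.{u} → P := fun η =>
    if h : ∃ a, a ∈ A η ∧ ∃ j, η ≤ ζζ j ∧ cc j ≤ a then h.choose else Classical.arbitrary P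
    with hfdef
  have hfspec : ∀ η, η < δ → f η ∈ A η ∧ ∃ j, η ≤ ζζ j ∧ cc j ≤ f η := by
    intro η hη
    have h := hex η hη
    simp only [hfdef, dif_pos h]
    exact h.choose_spec
  refine ⟨f, ⟨fun η hη => (hfspec η hη).1, ?_⟩, ?_⟩
  · intro η' η hle hη
    have hη' : η' < δ := lt_of_le_of_lt hle hη
    obtain ⟨hmem, j, hj, hja⟩ := hfspec η hη
    obtain ⟨hmem', _⟩ := hfspec η' hη'
    obtain ⟨d, hdA, hfd⟩ := hRef η' η hle (lt_of_lt_of_le hη hδlo) (f η) hmem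
    have : d = f η' :=
      huniq η' (lt_of_lt_of_le hη' hδlo) d (f η')
        ⟨hdA, j, hle.trans hj, hja.trans hfd⟩ (hfspec η' hη')
    exact this ▸ hfd
  · intro j
    have hjδ : ζζ j < δ := by
      refine lt_of_lt_of_le ?_ (le_ciSup hbdd j)
      rw [Ordinal.add_one_eq_succ]
      exact Order.lt_succ (ζζ j)
    exact huniq (ζζ j) (hζ j) (f (ζζ j)) (cc j) (hfspec (ζζ j) hjδ)
      ⟨hcA j, j, le_refl _, le_refl _⟩

/-- Given an extendability property and a comparable anchored family of size less
than the cofinality, there is a condition in some level of the matrix below the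
whole family. -/
lemma exists_lb (lo : Ordinal.{u}) (A : Ordinal.{u} → Set P)
    (hMA : ∀ ξ, ξ < lo → MaxAntichain (A ξ))
    (hRef : ∀ ξ η, ξ ≤ η → η < lo → Refines (A η) (A ξ))
    (hlim : Order.IsSuccLimit lo)
    (hext : ∀ δ, δ < lo → ∀ f, IsBranch A δ f → ∃ c ∈ A δ, ∀ η, η < δ → c ≤ f η)
    {J : Type u} [Nonempty J] (cc : J → P) (ζζ : J → Ordinal.{u})
    (hζ : ∀ j, ζζ j < lo) (hcA : ∀ j, cc j ∈ A (ζζ j))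
    (hcomp : ∀ j k, cc j ≤ cc k ∨ cc k ≤ cc j)
    (hcard : Cardinal.mk J < lo.cof) :
    ∃ δ : Ordinal.{u}, δ < lo ∧ ∃ d ∈ A δ, ∀ j, d ≤ cc j := by
  obtain ⟨f, hbr, hfc⟩ := cone_branch lo A hMA hRef cc ζζ hζ hcA hcomp
  have hbdd : BddAbove (Set.range fun j => ζζ j + 1) := Ordinal.bddAbove_range _
  have hδlo : (⨆ j, ζζ j + 1) < lo := by
    apply Ordinal.iSup_lt_ord hcard
    intro j
    rw [Ordinal.add_one_eq_succ]
    exact hlim.succ_lt (hζ j)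
  obtain ⟨d, hdA, hdle⟩ := hext _ hδlo f hbr
  refine ⟨_, hδlo, d, hdA, fun j => ?_⟩
  have hjδ : ζζ j < ⨆ j, ζζ j + 1 := by
    refine lt_of_lt_of_le ?_ (le_ciSup hbdd j)
    rw [Ordinal.add_one_eq_succ]
    exact Order.lt_succ (ζζ j)
  exact (hfc j) ▸ hdle (ζζ j) hjδ

end AuxProof

open scoped Classical in
/-- Recursion scaffold: choose at each stage an element satisfying `G` and below
all previously chosen ones, if possible. -/
noncomputable def bchain {P : Type u} [Preorder P] {ι : Type u} (r : ι → ι → Prop)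
    (wf : WellFounded r) (G : ι → P → Prop) (d : P) : ι → P :=
  wf.fix (fun i prev =>
    if h : ∃ x : P, G i x ∧ ∀ j (hj : r j i), x ≤ prev j hj then h.choose else d)

open scoped Classical in
lemma bchain_eq {P : Type u} [Preorder P] {ι : Type u} (r : ι → ι → Prop)
    (wf : WellFounded r) (G : ι → P → Prop) (d : P) (i : ι) :
    bchain r wf G d i =
      if h : ∃ x : P, G i x ∧ ∀ j (_ : r j i), x ≤ bchain r wf G d j then h.choose else d := by
  rw [bchain, wf.fix_eq]

/-- A base matrix for a forcing notion `P` of regular height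
`λ > 𝔥(P)` has a maximal branch which is not cofinal. -/
theorem base_matrix_noncofinal_branch {P : Type u} [PartialOrder P] [Nonempty P]
    (lam : Cardinal.{u}) (hreg : lam.IsRegular) (hgt : hdist P < lam)
    (A : Ordinal.{u} → Set P) (hbase : IsBaseMatrix P lam.ord A) :
    ∃ (δ : Ordinal.{u}) (f : Ordinal.{u} → P),
      δ < lam.ord ∧ IsMaximalBranch A lam.ord δ f := by
  classical
  obtain ⟨⟨hMA, hRef, hNoRef⟩, hDense⟩ := hbase
  set lo := lam.ord with hlodef
  by_contra H
  push_neg at H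
  -- Every branch of length `< λ` has a continuation point at its top level.
  have hext : ∀ δ, δ < lo → ∀ f, IsBranch A δ f → ∃ c ∈ A δ, ∀ η, η < δ → c ≤ f η := by
    intro δ hδ f hf
    have hnm := H δ f hδ
    rw [IsMaximalBranch] at hnm
    have hne : ∃ δ' g, δ < δ' ∧ δ' ≤ lo ∧ IsBranch A δ' g ∧ ∀ ξ, ξ < δ → g ξ = f ξ := by
      by_contra hno
      exact hnm ⟨le_of_lt hδ, hf, hno⟩
    obtain ⟨δ', g, hlt, _, hg, hagree⟩ := hne
    refine ⟨g δ, hg.1 δ hlt, fun η hη => ?_⟩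
    rw [← hagree η hη]
    exact hg.2 η δ (le_of_lt hη) hlt
  have hlo_lim : Order.IsSuccLimit lo := Cardinal.isSuccLimit_ord hreg.aleph0_le
  have hcof : lo.cof = lam := hreg.cof_eq
  -- `P` is not `λ`-distributive (witnessed by the matrix itself).
  have hnd : ¬ Distributive P lam := by
    intro hD
    obtain ⟨B, hB, hRefAll⟩ := hD lo.ToType
      (fun i => A ((((Ordinal.ToType.mk (o := lo))).symm i : Set.Iio lo) : Ordinal.{u}))
      (by rw [Cardinal.mk_toType, hlodef, Cardinal.card_ord])
      (fun i => hMA _ (((Ordinal.ToType.mk (o := lo))).symm i).2)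
    apply hNoRef
    refine ⟨B, hB, fun ξ hξ => ?_⟩
    have h := hRefAll ((Ordinal.ToType.mk (o := lo)) ⟨ξ, hξ⟩)
    rwa [OrderIso.symm_apply_apply] at h
  have hSne : {κ : Cardinal.{u} | ¬ Distributive P κ}.Nonempty := ⟨lam, hnd⟩
  have hndh : ¬ Distributive P (hdist P) := csInf_mem hSne
  -- Extract a witnessing family of `𝔥(P)` many maximal antichains.
  have hh' : ∃ ι : Type u, ∃ Bf : ι → Set P, Cardinal.mk ι = hdist P ∧
      (∀ i, MaxAntichain (Bf i)) ∧ ¬∃ C : Set P, MaxAntichain C ∧ ∀ i, Refines C (Bf i) := by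
    by_contra hno
    apply hndh
    intro ι Bf hmk hB
    by_contra hnoC
    exact hno ⟨ι, Bf, hmk, hB, hnoC⟩
  obtain ⟨ι, Bf, hmk, hBMA, hBNoRef⟩ := hh'
  have hι_lt : Cardinal.mk ι < lam := by rw [hmk]; exact hgt
  -- Density of the set of conditions below (elements of) every `Bf i`.
  have hdense : ∀ p : P, ∃ d : P, d ≤ p ∧ ∀ i, ∃ b ∈ Bf i, d ≤ b := by
    intro p
    obtain ⟨ζ₀, hζ₀, c₀, hc₀A, hc₀p⟩ := hDense p
    set r : ι → ι → Prop := WellOrderingRel with hrdef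
    have wf : WellFounded r := IsWellFounded.wf
    set G : ι → P → Prop := fun i x =>
      (∃ ζ, ζ < lo ∧ x ∈ A ζ) ∧ x ≤ c₀ ∧ ∃ b ∈ Bf i, x ≤ b with hGdef
    set c : ι → P := bchain r wf G c₀ with hcdef
    have Inv : ∀ i, G i (c i) ∧ ∀ j, r j i → c i ≤ c j := by
      intro i
      induction i using wf.induction with
      | _ i IH =>
        have hexists : ∃ x : P, G i x ∧ ∀ j (_ : r j i), x ≤ c j := by
          haveI : Nonempty (Option {j : ι // r j i}) := ⟨none⟩
          set cc : Option {j : ι // r j i} → P := fun o => match o with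
            | none => c₀ | some j => c j.1 with hccdef
          have hanchor : ∀ o, ∃ ζ, ζ < lo ∧ cc o ∈ A ζ := by
            rintro (_ | j)
            · exact ⟨ζ₀, hζ₀, hc₀A⟩
            · exact (IH j.1 j.2).1.1
          set ζζ : Option {j : ι // r j i} → Ordinal.{u} :=
            fun o => (hanchor o).choose with hζζdef
          have hζ : ∀ o, ζζ o < lo := fun o => (hanchor o).choose_spec.1
          have hcA : ∀ o, cc o ∈ A (ζζ o) := fun o => (hanchor o).choose_spec.2
          have hcomp : ∀ o o', cc o ≤ cc o' ∨ cc o' ≤ cc o := by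
            rintro (_ | j) (_ | k)
            · exact Or.inl le_rfl
            · exact Or.inr (IH k.1 k.2).1.2.1
            · exact Or.inl (IH j.1 j.2).1.2.1
            · rcases trichotomous_of r j.1 k.1 with h | h | h
              · exact Or.inr ((IH k.1 k.2).2 j.1 h)
              · exact Or.inl (le_of_eq (congrArg c h))
              · exact Or.inl ((IH j.1 j.2).2 k.1 h)
          have hcard : Cardinal.mk (Option {j : ι // r j i}) < lo.cof := by
            rw [hcof, Cardinal.mk_option]
            exact Cardinal.add_lt_of_lt hreg.aleph0_le
              (lt_of_le_of_lt (Cardinal.mk_subtype_le _) hι_lt)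
              (lt_of_lt_of_le Cardinal.one_lt_aleph0 hreg.aleph0_le)
          obtain ⟨δ, hδlo, d, hdA, hdle⟩ :=
            exists_lb lo A hMA hRef hlo_lim hext cc ζζ hζ hcA hcomp hcard
          obtain ⟨b, hb, x, hxd, hxb⟩ := (hBMA i).2 d
          obtain ⟨ζ, hζlo, y, hyA, hyx⟩ := hDense x
          refine ⟨y, ⟨⟨ζ, hζlo, hyA⟩, ?_, ⟨b, hb, hyx.trans hxb⟩⟩, ?_⟩
          · exact hyx.trans (hxd.trans (hdle none))
          · intro j hj
            exact hyx.trans (hxd.trans (hdle (some ⟨j, hj⟩)))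
        have heq := bchain_eq r wf G c₀ i
        rw [← hcdef] at heq
        rw [dif_pos hexists] at heq
        have hspec := hexists.choose_spec
        rw [← heq] at hspec
        exact ⟨hspec.1, fun j hj => hspec.2 j hj⟩
    -- Final diagonalization: get a single condition below `c₀` and all `c i`.
    haveI : Nonempty (Option ι) := ⟨none⟩
    set cc : Option ι → P := fun o => match o with
      | none => c₀ | some i => c i with hccdef
    have hanchor : ∀ o, ∃ ζ, ζ < lo ∧ cc o ∈ A ζ := by
      rintro (_ | i)
      · exact ⟨ζ₀, hζ₀, hc₀A⟩
      · exact (Inv i).1.1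
    set ζζ : Option ι → Ordinal.{u} := fun o => (hanchor o).choose with hζζdef
    have hζ : ∀ o, ζζ o < lo := fun o => (hanchor o).choose_spec.1
    have hcA : ∀ o, cc o ∈ A (ζζ o) := fun o => (hanchor o).choose_spec.2
    have hcomp : ∀ o o', cc o ≤ cc o' ∨ cc o' ≤ cc o := by
      rintro (_ | i) (_ | k)
      · exact Or.inl le_rfl
      · exact Or.inr (Inv k).1.2.1
      · exact Or.inl (Inv i).1.2.1
      · rcases trichotomous_of r i k with h | h | h
        · exact Or.inr ((Inv k).2 i h)
        · exact Or.inl (le_of_eq (congrArg c h))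
        · exact Or.inl ((Inv i).2 k h)
    have hcard : Cardinal.mk (Option ι) < lo.cof := by
      rw [hcof, Cardinal.mk_option]
      exact Cardinal.add_lt_of_lt hreg.aleph0_le hι_lt
        (lt_of_lt_of_le Cardinal.one_lt_aleph0 hreg.aleph0_le)
    obtain ⟨δ, hδlo, d, hdA, hdle⟩ :=
      exists_lb lo A hMA hRef hlo_lim hext cc ζζ hζ hcA hcomp hcard
    refine ⟨d, (hdle none).trans hc₀p, fun i => ?_⟩
    obtain ⟨b, hb, hcb⟩ := (Inv i).1.2.2
    exact ⟨b, hb, (hdle (some i)).trans hcb⟩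
  -- Build a maximal antichain inside the dense set; it refines every `Bf i`.
  apply hBNoRef
  set S : Set (Set P) :=
    {E | (∀ e ∈ E, ∀ i, ∃ b ∈ Bf i, e ≤ b) ∧
      ∀ p ∈ E, ∀ q ∈ E, p ≠ q → ¬ Compat p q} with hSdef
  have hchain : ∀ ch ⊆ S, IsChain (· ⊆ ·) ch → ∃ ub ∈ S, ∀ s ∈ ch, s ⊆ ub := by
    intro ch hchS hch
    refine ⟨⋃₀ ch, ⟨?_, ?_⟩, fun s hs => Set.subset_sUnion_of_mem hs⟩
    · rintro e ⟨s, hs, hes⟩ i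
      exact (hchS hs).1 e hes i
    · rintro p₁ ⟨s, hs, hps⟩ q₁ ⟨t, ht, hqt⟩ hne
      rcases hch.total hs ht with h | h
      · exact (hchS ht).2 p₁ (h hps) q₁ hqt hne
      · exact (hchS hs).2 p₁ hps q₁ (h hqt) hne
  obtain ⟨E, hEmax⟩ := zorn_subset S hchain
  refine ⟨E, ⟨hEmax.1.2, ?_⟩, fun i e he => (hEmax.1.1 e he i)⟩
  intro p
  obtain ⟨d, hdp, hdD⟩ := hdense p
  by_cases hc : ∃ e ∈ E, Compat d e
  · obtain ⟨e, he, x, hxd, hxe⟩ := hc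
    exact ⟨e, he, x, hxd.trans hdp, hxe⟩
  · exfalso
    have hdE : insert d E ∈ S := by
      constructor
      · intro e he i
        rcases Set.mem_insert_iff.1 he with rfl | he
        · exact hdD i
        · exact hEmax.1.1 e he i
      · intro p₁ hp₁ q₁ hq₁ hne hcom
        rcases Set.mem_insert_iff.1 hp₁ with hpd | hpE
        · rcases Set.mem_insert_iff.1 hq₁ with hqd | hqE
          · exact hne (hpd.trans hqd.symm)
          · exact hc ⟨q₁, hqE, hpd ▸ hcom⟩
        · rcases Set.mem_insert_iff.1 hq₁ with hqd | hqE
          · obtain ⟨x, h1, h2⟩ := hcom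
            exact hc ⟨p₁, hpE, x, hqd ▸ h2, h1⟩
          · exact hEmax.1.2 p₁ hpE q₁ hqE hne hcom
    have hsub := hEmax.2 hdE (Set.subset_insert d E)
    exact hc ⟨d, hsub (Set.mem_insert d E), d, le_rfl, le_rfl⟩
end

section
/- Let ℙ be a forcing notion, λ a regular cardinal, and ⟨A_ξ : ξ < λ⟩ a distributivity matrix for ℙ of height λ all of whose maximal branches are cofinal. Then for every limit ordinal μ < λ, every ≤-decreasing sequence ⟨a_i : i < μ⟩ of elements of ⋃_{ξ<λ} A_ξ has a lower bound belonging to ⋃_{ξ<λ} A_ξ. -/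
universe u

/-- If all maximal branches of a distributivity matrix of regular
height `λ` are cofinal, then every decreasing sequence of matrix elements of limit
length `μ < λ` has a lower bound in the matrix. -/
theorem lower_bound_in_matrix {P : Type u} [PartialOrder P] [Nonempty P]
    (lam : Cardinal.{u}) (hreg : lam.IsRegular)
    (A : Ordinal.{u} → Set P) (hmat : IsDistribMatrix P lam.ord A)
    (hcof : ∀ (δ : Ordinal.{u}) (f : Ordinal.{u} → P),
      IsMaximalBranch A lam.ord δ f → δ = lam.ord)
    (μ : Ordinal.{u}) (hμlt : μ < lam.ord) (hμlim : Order.IsSuccLimit μ)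
    (a : Ordinal.{u} → P)
    (hmem : ∀ i, i < μ → ∃ ξ, ξ < lam.ord ∧ a i ∈ A ξ)
    (hdec : ∀ i j : Ordinal.{u}, i ≤ j → j < μ → a j ≤ a i) :
    ∃ b : P, (∃ ξ, ξ < lam.ord ∧ b ∈ A ξ) ∧ ∀ i, i < μ → b ≤ a i := by
  classical
  obtain ⟨hmax, href, -⟩ := hmat
  have hlim : Order.IsSuccLimit lam.ord := Cardinal.isSuccLimit_ord hreg.aleph0_le
  have huniq : ∀ ξ < lam.ord, ∀ c ∈ A ξ, ∀ c' ∈ A ξ, ∀ r : P, r ≤ c → r ≤ c' → c = c' := by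
    intro ξ hξ c hc c' hc' r h1 h2
    by_contra hne
    exact (hmax ξ hξ).1 c hc c' hc' hne ⟨r, h1, h2⟩
  set g : Ordinal.{u} → Ordinal.{u} := fun i => if h : i < μ then (hmem i h).choose else 0
    with hgdef
  have hglt : ∀ i, i < μ → g i < lam.ord := by
    intro i h; simp only [hgdef, dif_pos h]; exact (hmem i h).choose_spec.1
  have hga : ∀ i (h : i < μ), a i ∈ A (g i) := by
    intro i h; simp only [hgdef, dif_pos h]; exact (hmem i h).choose_spec.2
  set δ := Ordinal.bsup μ (fun i _ => g i + 1) with hδdef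
  have hδlt : δ < lam.ord := by
    apply Ordinal.bsup_lt_ord
    · rw [hreg.cof_eq]; exact Cardinal.lt_ord.mp hμlt
    · intro i hi; exact hlim.succ_lt (hglt i hi)
  have hQex : ∀ ξ, ξ < δ → ∃ c, c ∈ A ξ ∧ ∃ i, i < μ ∧ ξ ≤ g i ∧ a i ≤ c := by
    intro ξ hξ
    rw [hδdef, Ordinal.lt_bsup] at hξ
    obtain ⟨i, hi, hξi⟩ := hξ
    have hξgi : ξ ≤ g i := Order.lt_add_one_iff.mp hξi
    obtain ⟨c, hc, hac⟩ := href ξ (g i) hξgi (hglt i hi) (a i) (hga i hi)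
    exact ⟨c, hc, i, hi, hξgi, hac⟩
  set f : Ordinal.{u} → P := fun ξ =>
    if h : ∃ c, c ∈ A ξ ∧ ∃ i, i < μ ∧ ξ ≤ g i ∧ a i ≤ c then h.choose
    else Classical.arbitrary P with hfdef
  have hfQ : ∀ ξ c, (c ∈ A ξ ∧ ∃ i, i < μ ∧ ξ ≤ g i ∧ a i ≤ c) → f ξ = c := by
    intro ξ c hQ
    have hex : ∃ c, c ∈ A ξ ∧ ∃ i, i < μ ∧ ξ ≤ g i ∧ a i ≤ c := ⟨c, hQ⟩
    simp only [hfdef, dif_pos hex]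
    obtain ⟨hc', i', hi', hξi', hai'⟩ := hex.choose_spec
    obtain ⟨hc, i, hi, hξi, hai⟩ := hQ
    have hξlt : ξ < lam.ord := lt_of_le_of_lt hξi (hglt i hi)
    rcases le_total i i' with hii | hii
    · exact huniq ξ hξlt _ hc' c hc (a i') hai' (le_trans (hdec i i' hii hi') hai)
    · exact huniq ξ hξlt _ hc' c hc (a i) (le_trans (hdec i' i hii hi) hai') hai
  have hfmem : ∀ ξ, ξ < δ → f ξ ∈ A ξ := by
    intro ξ hξ
    obtain ⟨c, hc, hrest⟩ := hQex ξ hξ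
    rw [hfQ ξ c ⟨hc, hrest⟩]; exact hc
  have hfa : ∀ i (h : i < μ), f (g i) = a i :=
    fun i h => hfQ (g i) (a i) ⟨hga i h, i, h, le_rfl, le_rfl⟩
  have hfdec : ∀ ξ η : Ordinal.{u}, ξ ≤ η → η < δ → f η ≤ f ξ := by
    intro ξ η hξη hη
    obtain ⟨c, hc, i, hi, hηi, hai⟩ := hQex η hη
    have hfη : f η = c := hfQ η c ⟨hc, i, hi, hηi, hai⟩
    obtain ⟨c', hc', hcc'⟩ := href ξ η hξη (lt_of_le_of_lt hηi (hglt i hi)) c hc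
    have hfξ : f ξ = c' := hfQ ξ c' ⟨hc', i, hi, le_trans hξη hηi, le_trans hai hcc'⟩
    rw [hfη, hfξ]; exact hcc'
  have hext : ∃ δ' g', δ < δ' ∧ δ' ≤ lam.ord ∧ IsBranch A δ' g' ∧ ∀ ξ, ξ < δ → g' ξ = f ξ := by
    by_contra h
    exact absurd (hcof δ f ⟨hδlt.le, ⟨hfmem, hfdec⟩, fun ⟨δ', g', h1, h2, h3, h4⟩ =>
      h ⟨δ', g', h1, h2, h3, h4⟩⟩) hδlt.ne
  obtain ⟨δ', g', hδδ', hδ'le, ⟨hg'mem, hg'dec⟩, hagree⟩ := hext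
  refine ⟨g' δ, ⟨δ, hδlt, hg'mem δ hδδ'⟩, ?_⟩
  intro i hi
  have hgiδ : g i < δ := lt_of_lt_of_le (Order.lt_add_one_iff.mpr le_rfl)
    (Ordinal.le_bsup (fun i _ => g i + 1) i hi)
  have h1 : g' δ ≤ g' (g i) := hg'dec (g i) δ hgiδ.le hδδ'
  rw [hagree (g i) hgiδ, hfa i hi] at h1
  exact h1
end

section
/- Let ℙ be a forcing notion and λ a cardinal. If ℙ is not λ-distributive, then Player I has a winning strategy in the λ-distributivity game G_λ(ℙ). -/
universe u

section Game

variable {P : Type u} [Preorder P]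

/-- A strategy in the distributivity game: given the stage `i` and the history of
moves at stages `j < i`, produce the next move. -/
abbrev GameStrategy (P : Type u) : Type (u + 1) :=
  (i : Ordinal.{u}) → ((j : Ordinal.{u}) → j < i → P) → P

/-- The history `h` (a position of the game) is decreasing. -/
def DecrHist {P : Type u} [Preorder P] {i : Ordinal.{u}}
    (h : (j : Ordinal.{u}) → j < i → P) : Prop :=
  ∀ j k (hj : j < i) (hk : k < i), j ≤ k → h k hk ≤ h j hj

/-- In the game of length `lam`, Player I moves at stage `0` and at successor stages
(i.e. at non-limit stages); a strategy for Player I must produce a legal move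
(a lower bound of the position) at every decreasing position where it is
Player I's turn. -/
def LegalStratI (lam : Ordinal.{u}) (σ : GameStrategy P) : Prop :=
  ∀ i, i < lam → ¬ Order.IsSuccLimit i →
    ∀ h : (j : Ordinal.{u}) → j < i → P, DecrHist h →
      ∀ j (hj : j < i), σ i h ≤ h j hj

/-- Player II moves at limit stages; a strategy for Player II must produce a legal
move at every decreasing limit position that admits a lower bound at all (if no
lower bound exists, the game ends and Player I wins immediately). -/
def LegalStratII (lam : Ordinal.{u}) (τ : GameStrategy P) : Prop :=
  ∀ i, i < lam → Order.IsSuccLimit i →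
    ∀ h : (j : Ordinal.{u}) → j < i → P, DecrHist h →
      (∃ b : P, ∀ j (hj : j < i), b ≤ h j hj) →
      ∀ j (hj : j < i), τ i h ≤ h j hj

/-- The sequence `r` follows the strategy `σ` of Player I at all non-limit stages
below `lam`. -/
def PlaysI (lam : Ordinal.{u}) (σ : GameStrategy P) (r : Ordinal.{u} → P) : Prop :=
  ∀ i, i < lam → ¬ Order.IsSuccLimit i → r i = σ i (fun j _ => r j)

/-- The sequence `r` follows the strategy `τ` of Player II at all limit stages
below `lam`. -/
def PlaysII (lam : Ordinal.{u}) (τ : GameStrategy P) (r : Ordinal.{u} → P) : Prop :=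
  ∀ i, i < lam → Order.IsSuccLimit i → r i = τ i (fun j _ => r j)

/-- `σ` is a winning strategy for Player I in the distributivity game of length
`lam`: it is a (legal) strategy, and every completed run of the game in which
Player I follows `σ` is won by Player I, i.e. there is no `b` lying below every
move of Player I.  (Runs which end prematurely because Player II cannot move at
some limit stage are automatically won by Player I; completed runs are exactly the
decreasing sequences of length `lam` in which Player II moved legally at every
limit stage.) -/
def WinningStratI (lam : Ordinal.{u}) (σ : GameStrategy P) : Prop :=
  LegalStratI lam σ ∧
  ∀ r : Ordinal.{u} → P, PlaysI lam σ r →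
    (∀ j k : Ordinal.{u}, j ≤ k → k < lam → r k ≤ r j) →
    ¬ ∃ b : P, ∀ i, i < lam → ¬ Order.IsSuccLimit i → b ≤ r i

/-- `τ` is a winning strategy for Player II in the distributivity game of length
`lam`: it is a (legal) strategy, and for every run in which Player II follows `τ`
and Player I moves legally (as long as the position is decreasing, i.e. as long as
nobody has already broken the rules), the run is decreasing throughout (in
particular Player II could always move at limit stages) and there is some `b`
lying below every move of Player I. -/
def WinningStratII (lam : Ordinal.{u}) (τ : GameStrategy P) : Prop :=
  LegalStratII lam τ ∧
  ∀ r : Ordinal.{u} → P, PlaysII lam τ r →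
    (∀ i, i < lam → ¬ Order.IsSuccLimit i →
      (∀ j k (hj : j < i) (hk : k < i), j ≤ k → r k ≤ r j) →
      ∀ j, j < i → r i ≤ r j) →
    (∀ j k : Ordinal.{u}, j ≤ k → k < lam → r k ≤ r j) ∧
    ∃ b : P, ∀ i, i < lam → ¬ Order.IsSuccLimit i → b ≤ r i

end Game

/-- Auxiliary: given a family of maximal antichains indexed by ordinals below
`lam.ord` and a condition `p` below which no condition meets all of them,
Player I has a winning strategy. -/
theorem exists_winning_aux {P : Type u} [PartialOrder P] [Nonempty P]
    (lam : Cardinal.{u}) (hpos : 0 < lam.ord)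
    (A' : Ordinal.{u} → Set P)
    (hmax : ∀ ξ, ξ < lam.ord → MaxAntichain (A' ξ))
    (p : P) (hp : ∀ b, b ≤ p → ¬ ∀ ξ, ξ < lam.ord → ∃ a ∈ A' ξ, b ≤ a) :
    ∃ σ : GameStrategy P, WinningStratI lam.ord σ := by
  classical
  have hg : ∀ (q : P) (ξ : Ordinal.{u}), ∃ r : P, r ≤ q ∧
      (ξ < lam.ord → ∃ a ∈ A' ξ, r ≤ a) := by
    intro q ξ
    by_cases hξ : ξ < lam.ord
    · obtain ⟨a, ha, r, hrq, hra⟩ := (hmax ξ hξ).2 q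
      exact ⟨r, hrq, fun _ => ⟨a, ha, hra⟩⟩
    · exact ⟨q, le_rfl, fun hc => absurd hc hξ⟩
  choose g hg1 hg2 using hg
  refine ⟨fun i h => if hp' : Ordinal.pred i < i then
      g (g (h (Ordinal.pred i) hp') (Ordinal.pred i)) i else g p 0, ?_, ?_⟩
  · -- legality
    intro i hi hnl h hdec j hj
    rcases Ordinal.zero_or_succ_or_isSuccLimit i with e | ⟨k, e⟩ | hl
    · subst e; exact absurd hj (fun h => not_lt_zero h)
    · subst e
      have hp' : Ordinal.pred (Order.succ k) < Order.succ k := by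
        rw [Ordinal.pred_succ]; exact Order.lt_succ k
      simp only [dif_pos hp']
      refine le_trans (le_trans (hg1 _ _) (hg1 _ _)) ?_
      exact hdec j _ hj hp' (by rw [Ordinal.pred_succ]; exact Order.lt_succ_iff.mp hj)
    · exact absurd hl hnl
  · -- winning
    rintro r hplays hdec ⟨b, hb⟩
    have hnl0 : ¬ Order.IsSuccLimit (0 : Ordinal.{u}) := Ordinal.not_isSuccLimit_zero
    have hr0 : r 0 = g p 0 := by
      rw [hplays 0 hpos hnl0]
      simp [Ordinal.pred_zero]
    have hbp : b ≤ p := by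
      have hb0 := hb 0 hpos hnl0
      rw [hr0] at hb0
      exact hb0.trans (hg1 p 0)
    have heval : ∀ k : Ordinal.{u}, Order.succ k < lam.ord →
        r (Order.succ k) = g (g (r k) k) (Order.succ k) := by
      intro k hk
      rw [hplays _ hk (Order.not_isSuccLimit_succ k)]
      have hp' : Ordinal.pred (Order.succ k) < Order.succ k := by
        rw [Ordinal.pred_succ]; exact Order.lt_succ k
      simp only [dif_pos hp', Ordinal.pred_succ]
      rw [dif_pos (Order.lt_succ k)]
    apply hp b hbp
    intro ξ hξ
    rcases Ordinal.zero_or_succ_or_isSuccLimit ξ with e | ⟨k, e⟩ | hl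
    · subst e
      obtain ⟨a, ha, hle⟩ := hg2 p 0 hpos
      refine ⟨a, ha, ?_⟩
      have hb0 := hb 0 hpos hnl0
      rw [hr0] at hb0
      exact hb0.trans hle
    · subst e
      obtain ⟨a, ha, hle⟩ := hg2 (g (r k) k) (Order.succ k) hξ
      refine ⟨a, ha, ?_⟩
      have hbs := hb _ hξ (Order.not_isSuccLimit_succ k)
      rw [heval k hξ] at hbs
      exact hbs.trans hle
    · have hω : Cardinal.aleph0 ≤ lam := by
        apply Cardinal.ord_le_ord.mp
        rw [Cardinal.ord_aleph0]
        exact (Ordinal.omega0_le_of_isSuccLimit hl).trans hξ.le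
      have hs : Order.succ ξ < lam.ord := (Cardinal.isSuccLimit_ord hω).succ_lt hξ
      obtain ⟨a, ha, hle⟩ := hg2 (r ξ) ξ hξ
      refine ⟨a, ha, ?_⟩
      have hbs := hb _ hs (Order.not_isSuccLimit_succ ξ)
      rw [heval ξ hs] at hbs
      exact hbs.trans ((hg1 _ _).trans hle)

/-- If `P` is not `λ`-distributive then Player I has a winning
strategy in the `λ`-distributivity game on `P`. -/
theorem not_distributive_winning_strategy {P : Type u} [PartialOrder P] [Nonempty P]
    (lam : Cardinal.{u}) (h : ¬ Distributive P lam) :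
    ∃ σ : GameStrategy P, WinningStratI lam.ord σ := by
  classical
  rw [Distributive] at h
  push_neg at h
  obtain ⟨ι, A, hmk, hAmax, hno⟩ := h
  -- First: there is a condition `p` below which nothing meets all antichains.
  have hex : ∃ p : P, ∀ b, b ≤ p → ¬ ∀ i, ∃ a ∈ A i, b ≤ a := by
    by_contra hcon
    push_neg at hcon
    have hchain : ∀ c ⊆ {S : Set P | (∀ b ∈ S, ∀ i, ∃ a ∈ A i, b ≤ a) ∧
          ∀ p ∈ S, ∀ q ∈ S, p ≠ q → ¬ Compat p q}, IsChain (· ⊆ ·) c →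
        ∃ ub ∈ {S : Set P | (∀ b ∈ S, ∀ i, ∃ a ∈ A i, b ≤ a) ∧
          ∀ p ∈ S, ∀ q ∈ S, p ≠ q → ¬ Compat p q}, ∀ s ∈ c, s ⊆ ub := by
      intro c hcS hchain
      refine ⟨⋃₀ c, ⟨?_, ?_⟩, fun s hs => Set.subset_sUnion_of_mem hs⟩
      · rintro b ⟨s, hs, hbs⟩ i
        exact (hcS hs).1 b hbs i
      · rintro x ⟨s, hs, hxs⟩ y ⟨t, ht, hyt⟩ hxy
        by_cases hst : s = t
        · subst hst; exact (hcS hs).2 x hxs y hyt hxy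
        · rcases hchain hs ht hst with hsub | hsub
          · exact (hcS ht).2 x (hsub hxs) y hyt hxy
          · exact (hcS hs).2 x hxs y (hsub hyt) hxy
    obtain ⟨B, hB⟩ := zorn_subset
        {S : Set P | (∀ b ∈ S, ∀ i, ∃ a ∈ A i, b ≤ a) ∧
          ∀ p ∈ S, ∀ q ∈ S, p ≠ q → ¬ Compat p q} hchain
    obtain ⟨⟨hBD, hBac⟩, hBmax⟩ := hB
    have hBm : ∀ q : P, ∃ a ∈ B, Compat q a := by
      intro q
      obtain ⟨d, hdq, hdD⟩ := hcon q
      have hd : ∃ a ∈ B, Compat d a := by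
        by_contra hnc
        push_neg at hnc
        have hdB : d ∉ B := fun hdB => hnc d hdB ⟨d, le_rfl, le_rfl⟩
        have hins : insert d B ∈
            {S : Set P | (∀ b ∈ S, ∀ i, ∃ a ∈ A i, b ≤ a) ∧
              ∀ p ∈ S, ∀ q ∈ S, p ≠ q → ¬ Compat p q} := by
          constructor
          · rintro b (rfl | hb) i
            · exact hdD i
            · exact hBD b hb i
          · rintro x (rfl | hx) y (rfl | hy) hxy
            · exact absurd rfl hxy
            · exact hnc y hy
            · exact fun ⟨c, h1, h2⟩ => hnc x hx ⟨c, h2, h1⟩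
            · exact hBac x hx y hy hxy
        exact hdB (hBmax hins (Set.subset_insert d B) (Set.mem_insert d B))
      obtain ⟨a, haB, c, hcd, hca⟩ := hd
      exact ⟨a, haB, c, hcd.trans hdq, hca⟩
    obtain ⟨i, hi⟩ := hno B ⟨hBac, hBm⟩
    exact hi (fun b hb => hBD b hb i)
  obtain ⟨p, hp⟩ := hex
  by_cases h0 : lam = 0
  · exfalso
    have hι : IsEmpty ι := Cardinal.mk_eq_zero_iff.mp (by rw [hmk, h0])
    exact hp p le_rfl (fun i => hι.elim i)
  · have hpos : 0 < lam.ord :=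
      pos_iff_ne_zero.2 (fun e => h0 (Cardinal.ord_eq_zero.mp e))
    have hcard : Cardinal.mk lam.ord.ToType = Cardinal.mk ι := by
      rw [Cardinal.mk_toType, Cardinal.card_ord, hmk]
    obtain ⟨E⟩ := Cardinal.eq.mp hcard
    refine exists_winning_aux lam hpos
      (fun ξ => if hξ : ξ < lam.ord then
        A (E ((Ordinal.ToType.mk (o := lam.ord)) ⟨ξ, hξ⟩)) else ∅) ?_ p ?_
    · intro ξ hξ
      simp only [dif_pos hξ]
      exact hAmax _
    · intro b hbp hall
      apply hp b hbp
      intro i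
      obtain ⟨⟨ξ, hξ⟩, hx⟩ : ∃ x : Set.Iio lam.ord,
          E ((Ordinal.ToType.mk (o := lam.ord)) x) = i :=
        ⟨(Ordinal.ToType.mk (o := lam.ord)).symm (E.symm i), by simp⟩
      have hξ' : ξ < lam.ord := hξ
      have hthis := hall ξ hξ'
      simp only [dif_pos hξ'] at hthis
      obtain ⟨a, ha, hba⟩ := hthis
      refine ⟨a, ?_, hba⟩
      rw [← hx]
      exact ha
end

section
/- Let λ be a regular cardinal with λ > 𝔥, where 𝔥 = 𝔥(ℙ_ω) and ℙ_ω is the forcing of infinite subsets of ω ordered by almost-inclusion ⊆*. If ⟨A_ξ : ξ < λ⟩ is a base matrix for ℙ_ω of height λ, then for every element a ∈ ⋃_{ξ<λ} A_ξ there is a maximal branch of the matrix containing a which is not cofinal. -/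
universe u

/-- The forcing `ℙ_ω`: infinite subsets of `ω` ordered by almost-inclusion `⊆*`. -/
def Pinf : Type := {a : Set ℕ // a.Infinite}

/-- `b ≤ a` iff `b ⊆* a`, i.e. `b \ a` is finite. -/
instance : Preorder Pinf where
  le b a := (b.1 \ a.1).Finite
  le_refl a := by simp
  le_trans a b c hab hbc := by
    refine Set.Finite.subset (hab.union hbc) ?_
    intro x hx
    by_cases hxb : x ∈ b.1
    · exact Or.inr ⟨hxb, hx.2⟩
    · exact Or.inl ⟨hx.1, hxb⟩

instance : Nonempty Pinf := ⟨⟨Set.univ, Set.infinite_univ⟩⟩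

section Basic

lemma Pinf.le_def {p q : Pinf} : p ≤ q ↔ (p.1 \ q.1).Finite := Iff.rfl

lemma Pinf.le_of_subset (p q : Pinf) (h : p.1 ⊆ q.1) : p ≤ q := by
  refine Pinf.le_def.mpr ?_
  rw [Set.diff_eq_empty.mpr h]
  exact Set.finite_empty

lemma Pinf.infinite_inter_left {p q : Pinf} (h : p ≤ q) : (p.1 ∩ q.1).Infinite := by
  have hsub : p.1 ⊆ (p.1 ∩ q.1) ∪ (p.1 \ q.1) := by
    intro x hx
    by_cases hq : x ∈ q.1
    · exact Or.inl ⟨hx, hq⟩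
    · exact Or.inr ⟨hx, hq⟩
  intro hfin
  exact p.2 (Set.Finite.subset (hfin.union (Pinf.le_def.mp h)) hsub)

lemma Pinf.split (p : Pinf) : ∃ s : Set ℕ, s ⊆ p.1 ∧ s.Infinite ∧ (p.1 \ s).Infinite := by
  have e := p.2.natEmbedding
  refine ⟨Set.range (fun n => (e (2 * n)).1), ?_, ?_, ?_⟩
  · rintro x ⟨n, rfl⟩; exact (e (2 * n)).2
  · apply Set.infinite_range_of_injective
    intro m n h
    have := e.injective (Subtype.val_injective h)
    omega
  · have hsub : Set.range (fun n => (e (2 * n + 1)).1) ⊆ p.1 \ Set.range (fun n => (e (2 * n)).1) := by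
      rintro x ⟨n, rfl⟩
      refine ⟨(e (2 * n + 1)).2, ?_⟩
      rintro ⟨m, hm⟩
      have := e.injective (Subtype.val_injective hm)
      omega
    refine Set.Infinite.mono hsub ?_
    apply Set.infinite_range_of_injective
    intro m n h
    have := e.injective (Subtype.val_injective h)
    omega

lemma Pinf.not_compat_of_disjoint (p q : Pinf) (hd : (p.1 ∩ q.1).Finite) : ¬ Compat p q := by
  rintro ⟨r, h1, h2⟩
  have hsub : r.1 ⊆ (r.1 \ p.1) ∪ (r.1 \ q.1) ∪ (p.1 ∩ q.1) := by
    intro x hx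
    by_cases hxs : x ∈ p.1
    · by_cases hxt : x ∈ q.1
      · exact Or.inr ⟨hxs, hxt⟩
      · exact Or.inl (Or.inr ⟨hx, hxt⟩)
    · exact Or.inl (Or.inl ⟨hx, hxs⟩)
  have h1' : (r.1 \ p.1).Finite := Pinf.le_def.mp h1
  have h2' : (r.1 \ q.1).Finite := Pinf.le_def.mp h2
  exact r.2 (Set.Finite.subset ((h1'.union h2').union hd) hsub)

end Basic
section Zorn

lemma Pinf.compat_symm {p q : Pinf} (h : Compat p q) : Compat q p := by
  obtain ⟨r, h1, h2⟩ := h; exact ⟨r, h2, h1⟩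

lemma Pinf.exists_maxAntichain (X : Set Pinf) (C₀ : Set Pinf)
    (hC₀X : C₀ ⊆ X)
    (hC₀ : ∀ p ∈ C₀, ∀ q ∈ C₀, p ≠ q → ¬ Compat p q)
    (hX : ∀ p : Pinf, ∃ q : Pinf, q ≤ p ∧ q ∈ X) :
    ∃ C : Set Pinf, C₀ ⊆ C ∧ C ⊆ X ∧ MaxAntichain C := by
  classical
  set S : Set (Set Pinf) := {C | C ⊆ X ∧ ∀ p ∈ C, ∀ q ∈ C, p ≠ q → ¬ Compat p q} with hS
  have hC₀S : C₀ ∈ S := ⟨hC₀X, hC₀⟩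
  have hchain : ∀ c ⊆ S, IsChain (fun x1 x2 => x1 ⊆ x2) c → c.Nonempty →
      ∃ ub ∈ S, ∀ s ∈ c, s ⊆ ub := by
    intro c hcS hchain _
    refine ⟨⋃₀ c, ⟨?_, ?_⟩, fun s hs => Set.subset_sUnion_of_mem hs⟩
    · rintro x ⟨s, hs, hxs⟩
      exact (hcS hs).1 hxs
    · rintro p ⟨s1, hs1, hps1⟩ q ⟨s2, hs2, hqs2⟩ hne
      rcases eq_or_ne s1 s2 with rfl | hs12
      · exact (hcS hs1).2 p hps1 q hqs2 hne
      · rcases hchain hs1 hs2 hs12 with h | h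
        · exact (hcS hs2).2 p (h hps1) q hqs2 hne
        · exact (hcS hs1).2 p hps1 q (h hqs2) hne
  obtain ⟨M, hM0, hMmax⟩ := zorn_subset_nonempty S hchain C₀ hC₀S
  have hMS : M ∈ S := hMmax.prop
  refine ⟨M, hM0, hMS.1, hMS.2, ?_⟩
  intro p
  by_contra hp
  push_neg at hp
  obtain ⟨q, hqp, hqX⟩ := hX p
  have hqinc : ∀ a ∈ M, ¬ Compat q a := by
    intro a ha hc
    obtain ⟨r, h1, h2⟩ := hc
    exact hp a ha ⟨r, le_trans h1 hqp, h2⟩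
  have hqM : q ∉ M := by
    intro hqM
    exact hqinc q hqM ⟨q, le_refl q, le_refl q⟩
  have hins : insert q M ∈ S := by
    constructor
    · intro x hx
      rcases hx with rfl | hx
      · exact hqX
      · exact hMS.1 hx
    · intro x hx y hy hne
      rcases hx with rfl | hx
      · rcases hy with rfl | hy
        · exact absurd rfl hne
        · exact hqinc y hy
      · rcases hy with rfl | hy
        · exact fun hc => hqinc x hx (Pinf.compat_symm hc)
        · exact hMS.2 x hx y hy hne
  have := hMmax.le_of_ge hins (Set.subset_insert q M)
  exact hqM (this (Set.mem_insert q M))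

end Zorn
section NotDistrib

lemma Pinf.not_distributive_exists : ∃ κ : Cardinal.{0}, ¬ Distributive Pinf κ := by
  classical
  refine ⟨Cardinal.mk {C : Set Pinf // MaxAntichain C}, ?_⟩
  intro hdis
  obtain ⟨B, hBmax, href⟩ := hdis {C : Set Pinf // MaxAntichain C} (fun C => C.1) rfl
    (fun C => C.2)
  obtain ⟨b, hbB, -⟩ := hBmax.2 (Classical.arbitrary Pinf)
  obtain ⟨s, hs1, hs2, hs3⟩ := Pinf.split b
  set b0 : Pinf := ⟨s, hs2⟩ with hb0
  set b1 : Pinf := ⟨b.1 \ s, hs3⟩ with hb1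
  have hd : (b0.1 ∩ b1.1).Finite := by
    have : b0.1 ∩ b1.1 = ∅ := by
      ext x; simp only [Set.mem_inter_iff, Set.mem_diff, Set.mem_empty_iff_false, iff_false]
      rintro ⟨hx1, _, hx2⟩; exact hx2 hx1
    rw [this]; exact Set.finite_empty
  have hpair : ∀ p ∈ ({b0, b1} : Set Pinf), ∀ q ∈ ({b0, b1} : Set Pinf), p ≠ q → ¬ Compat p q := by
    rintro p (rfl | rfl) q (rfl | rfl) hne
    · exact absurd rfl hne
    · exact Pinf.not_compat_of_disjoint _ _ hd
    · exact fun hc => Pinf.not_compat_of_disjoint _ _ hd (Pinf.compat_symm hc)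
    · exact absurd rfl hne
  obtain ⟨C, hC0, -, hCmax⟩ := Pinf.exists_maxAntichain Set.univ {b0, b1}
    (Set.subset_univ _) hpair (fun p => ⟨p, le_refl p, trivial⟩)
  obtain ⟨c, hcC, hbc⟩ := href ⟨C, hCmax⟩ b hbB
  have hb0b : b0 ≤ b := Pinf.le_of_subset b0 b hs1
  have hb0c : b0 ≤ c := le_trans hb0b hbc
  have hceq : c = b0 := by
    by_contra hne
    exact hCmax.1 c hcC b0 (hC0 (Set.mem_insert _ _)) hne ⟨b0, hb0c, le_refl b0⟩
  rw [hceq] at hbc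
  exact hs3 (Pinf.le_def.mp hbc)

lemma Pinf.hdist_not_distributive : ¬ Distributive Pinf (hdist Pinf) :=
  csInf_mem Pinf.not_distributive_exists

lemma Pinf.exists_bad_point {ι : Type} (B : ι → Set Pinf) (hB : ∀ i, MaxAntichain (B i))
    (hno : ¬ ∃ C : Set Pinf, MaxAntichain C ∧ ∀ i, Refines C (B i)) :
    ∃ p₀ : Pinf, ∀ q : Pinf, q ≤ p₀ → ∃ i, ∀ b ∈ B i, ¬ q ≤ b := by
  classical
  by_contra hcon
  push_neg at hcon
  set X := {q : Pinf | ∀ i, ∃ b ∈ B i, q ≤ b} with hX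
  have hXdense : ∀ p : Pinf, ∃ q : Pinf, q ≤ p ∧ q ∈ X := by
    intro p
    obtain ⟨q, hqp, hq⟩ := hcon p
    exact ⟨q, hqp, hq⟩
  obtain ⟨C, -, hCX, hCmax⟩ := Pinf.exists_maxAntichain X ∅ (Set.empty_subset _)
    (by rintro p ⟨⟩) hXdense
  exact hno ⟨C, hCmax, fun i c hc => hCX hc i⟩

end NotDistrib
section Transfer

/-- The transfer map between cones, induced by a bijection of two infinite sets. -/
def Phi (u v : Pinf) (e : ↥u.1 ≃ ↥v.1) (x : Set ℕ) : Set ℕ :=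
  Subtype.val '' (⇑e '' (Subtype.val ⁻¹' x))

lemma Phi_subset (u v : Pinf) (e : ↥u.1 ≃ ↥v.1) (x : Set ℕ) : Phi u v e x ⊆ v.1 := by
  rintro y ⟨⟨z, hz⟩, -, rfl⟩
  exact hz

lemma Phi_mono (u v : Pinf) (e : ↥u.1 ≃ ↥v.1) {x y : Set ℕ} (h : x ⊆ y) :
    Phi u v e x ⊆ Phi u v e y :=
  Set.image_mono (Set.image_mono (Set.preimage_mono h))

lemma Phi_diff (u v : Pinf) (e : ↥u.1 ≃ ↥v.1) (x y : Set ℕ) :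
    Phi u v e (x \ y) = Phi u v e x \ Phi u v e y := by
  unfold Phi
  rw [Set.preimage_diff, Set.image_diff e.injective, Set.image_diff Subtype.val_injective]

lemma Phi_finite (u v : Pinf) (e : ↥u.1 ≃ ↥v.1) {x : Set ℕ} (h : x.Finite) :
    (Phi u v e x).Finite := by
  have h1 : (Subtype.val ⁻¹' x : Set ↥u.1).Finite :=
    Set.Finite.preimage (Set.injOn_of_injective Subtype.val_injective) h
  exact ((h1.image _).image _)

lemma Phi_infinite (u v : Pinf) (e : ↥u.1 ≃ ↥v.1) {x : Set ℕ} (h : (x ∩ u.1).Infinite) :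
    (Phi u v e x).Infinite := by
  have h0 : x ∩ u.1 = Subtype.val '' (Subtype.val ⁻¹' x : Set ↥u.1) := by
    rw [Set.image_preimage_eq_inter_range, Subtype.range_coe]
  have h1 : (Subtype.val ⁻¹' x : Set ↥u.1).Infinite := by
    intro hfin
    rw [h0] at h
    exact h (hfin.image _)
  exact ((h1.image (Set.injOn_of_injective e.injective)).image
    (Set.injOn_of_injective Subtype.val_injective))

lemma Phi_symm_Phi (u v : Pinf) (e : ↥u.1 ≃ ↥v.1) (x : Set ℕ) :
    Phi v u e.symm (Phi u v e x) = x ∩ u.1 := by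
  unfold Phi
  rw [Set.preimage_image_eq _ Subtype.val_injective, Equiv.symm_image_image,
    Set.image_preimage_eq_inter_range, Subtype.range_coe]

lemma Pinf.transfer (a p₀ : Pinf) {ι : Type} (E : ι → Set Pinf)
    (hdense : ∀ i, ∀ r : Pinf, ∃ q : Pinf, q ≤ r ∧ q ∈ E i)
    (hdc : ∀ i, ∀ q q' : Pinf, q ≤ q' → q' ∈ E i → q ∈ E i)
    (hbad : ∀ q : Pinf, q ≤ p₀ → ∃ i, q ∉ E i) :
    ∃ E' : ι → Set Pinf,
      (∀ i, ∀ q q' : Pinf, q ≤ a → q ≤ q' → q' ∈ E' i → q ∈ E' i) ∧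
      (∀ i, ∀ r : Pinf, r ≤ a → ∃ q : Pinf, q ≤ r ∧ q ∈ E' i) ∧
      (∀ q : Pinf, q ≤ a → ∃ i, q ∉ E' i) := by
  classical
  haveI : Infinite ↥a.1 := Set.infinite_coe_iff.mpr a.2
  haveI : Infinite ↥p₀.1 := Set.infinite_coe_iff.mpr p₀.2
  have hmk : Cardinal.mk ↥a.1 = Cardinal.mk ↥p₀.1 := by
    rw [Cardinal.mk_eq_aleph0, Cardinal.mk_eq_aleph0]
  obtain ⟨e⟩ := Cardinal.eq.mp hmk
  set F : Set ℕ → Set ℕ := Phi a p₀ e with hF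
  set G : Set ℕ → Set ℕ := Phi p₀ a e.symm with hG
  have hGF : ∀ x, G (F x) = x ∩ a.1 := fun x => Phi_symm_Phi a p₀ e x
  have hFG : ∀ y, F (G y) = y ∩ p₀.1 := by
    intro y
    have := Phi_symm_Phi p₀ a e.symm y
    rwa [Equiv.symm_symm] at this
  refine ⟨fun i => {q : Pinf | ∃ h : (F q.1).Infinite, (⟨F q.1, h⟩ : Pinf) ∈ E i}, ?_, ?_, ?_⟩
  · -- downward closed below a
    rintro i q q' hqa hqq' ⟨hinf', hmem'⟩
    have hqinf : (F q.1).Infinite := Phi_infinite a p₀ e (Pinf.infinite_inter_left hqa)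
    refine ⟨hqinf, ?_⟩
    set qA : Pinf := ⟨F q.1, hqinf⟩ with hqA
    set qB : Pinf := ⟨F q'.1, hinf'⟩ with hqB
    have hle : qA ≤ qB := by
      refine Pinf.le_def.mpr ?_
      have h2 : F q.1 \ F q'.1 = F (q.1 \ q'.1) := (Phi_diff a p₀ e _ _).symm
      show (F q.1 \ F q'.1).Finite
      rw [h2]
      exact Phi_finite a p₀ e (Pinf.le_def.mp hqq')
    exact hdc i qA qB hle hmem'
  · -- density below a
    intro i r hra
    have hrinf : (F r.1).Infinite := Phi_infinite a p₀ e (Pinf.infinite_inter_left hra)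
    set rF : Pinf := ⟨F r.1, hrinf⟩ with hrF
    obtain ⟨q', hq'le, hq'mem⟩ := hdense i rF
    have hq''inf : (q'.1 ∩ F r.1).Infinite := Pinf.infinite_inter_left hq'le
    set q'' : Pinf := ⟨q'.1 ∩ F r.1, hq''inf⟩ with hq''
    have hq''mem : q'' ∈ E i := hdc i q'' q' (Pinf.le_of_subset _ _ Set.inter_subset_left) hq'mem
    have hq''p₀ : q''.1 ⊆ p₀.1 := fun x hx => Phi_subset a p₀ e r.1 hx.2
    have hGinf : (G q''.1).Infinite := by
      refine Phi_infinite p₀ a e.symm ?_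
      rw [Set.inter_eq_left.mpr hq''p₀]
      exact hq''inf
    set q : Pinf := ⟨G q''.1, hGinf⟩ with hq
    have hqr : q ≤ r := by
      refine Pinf.le_of_subset _ _ ?_
      have h1 : G q''.1 ⊆ G (F r.1) := Phi_mono p₀ a e.symm Set.inter_subset_right
      rw [hGF] at h1
      exact fun x hx => (h1 hx).1
    refine ⟨q, hqr, ?_⟩
    have hFq : F q.1 = q''.1 := by
      rw [show q.1 = G q''.1 from rfl, hFG, Set.inter_eq_left.mpr hq''p₀]
    have hFqinf : (F q.1).Infinite := by rw [hFq]; exact hq''inf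
    refine ⟨hFqinf, ?_⟩
    have : (⟨F q.1, hFqinf⟩ : Pinf) = q'' := Subtype.ext hFq
    rw [this]
    exact hq''mem
  · -- bad point below a
    intro q hqa
    have hqinf : (F q.1).Infinite := Phi_infinite a p₀ e (Pinf.infinite_inter_left hqa)
    set qF : Pinf := ⟨F q.1, hqinf⟩ with hqF
    have hqFp₀ : qF ≤ p₀ := Pinf.le_of_subset _ _ (Phi_subset a p₀ e q.1)
    obtain ⟨i, hnot⟩ := hbad qF hqFp₀
    refine ⟨i, ?_⟩
    rintro ⟨h', hmem'⟩
    have : (⟨F q.1, h'⟩ : Pinf) = qF := Subtype.ext rfl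
    rw [this] at hmem'
    exact hnot hmem'

end Transfer
/-- For a base matrix for `ℙ_ω` of regular height `λ > 𝔥`, through
every element of the matrix there is a maximal branch which is not cofinal. -/
theorem base_matrix_noncofinal_branch_through_every_node
    (lam : Cardinal.{0}) (hreg : lam.IsRegular) (hgt : hdist Pinf < lam)
    (A : Ordinal.{0} → Set Pinf) (hbase : IsBaseMatrix Pinf lam.ord A)
    (a : Pinf) (ha : ∃ ξ, ξ < lam.ord ∧ a ∈ A ξ) :
    ∃ (δ : Ordinal.{0}) (f : Ordinal.{0} → Pinf),
      δ < lam.ord ∧ IsMaximalBranch A lam.ord δ f ∧ ∃ ξ, ξ < δ ∧ f ξ = a := by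
  classical
  obtain ⟨⟨hmax, href, -⟩, hdense⟩ := hbase
  obtain ⟨ξ₀, hξ₀L, haA⟩ := ha
  -- uniqueness of antichain elements above a condition
  have U : ∀ ξ, ξ < lam.ord → ∀ x ∈ A ξ, ∀ y ∈ A ξ, ∀ p : Pinf, p ≤ x → p ≤ y → x = y := by
    intro ξ hξ x hx y hy p hpx hpy
    by_contra hne
    exact (hmax ξ hξ).1 x hx y hy hne ⟨p, hpx, hpy⟩
  -- no condition is below elements of every level
  have nocol : ∀ c : Pinf, ∃ ξ, ξ < lam.ord ∧ ∀ x ∈ A ξ, ¬ c ≤ x := by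
    intro c
    by_contra hcon
    push_neg at hcon
    obtain ⟨s, hs1, hs2, hs3⟩ := Pinf.split c
    set cs : Pinf := ⟨s, hs2⟩ with hcs
    obtain ⟨ζ, hζ, d, hd, hdcs⟩ := hdense cs
    obtain ⟨x, hx, hcx⟩ := hcon ζ hζ
    have hdc : d ≤ c := le_trans hdcs (Pinf.le_of_subset cs c hs1)
    have hdx : d = x := U ζ hζ d hd x hx d (le_refl d) (le_trans hdc hcx)
    have hccs : c ≤ cs := le_trans (hdx ▸ hcx) hdcs
    exact hs3 (Pinf.le_def.mp hccs)
  set Bad : Pinf → Set Ordinal.{0} := fun p => {ξ | ξ < lam.ord ∧ ∀ x ∈ A ξ, ¬ p ≤ x}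
    with hBad
  have hBadne : ∀ p : Pinf, (Bad p).Nonempty := by
    intro p
    obtain ⟨ξ, h1, h2⟩ := nocol p
    exact ⟨ξ, h1, h2⟩
  set δ : Pinf → Ordinal.{0} := fun p => sInf (Bad p) with hδ
  have hδmem : ∀ p, δ p ∈ Bad p := fun p => csInf_mem (hBadne p)
  have hδL : ∀ p, δ p < lam.ord := fun p => (hδmem p).1
  have hδnone : ∀ p, ∀ x ∈ A (δ p), ¬ p ≤ x := fun p => (hδmem p).2
  have hδabove : ∀ p ξ, ξ < δ p → ∃ x ∈ A ξ, p ≤ x := by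
    intro p ξ hξ
    by_contra hno
    push_neg at hno
    have hmem : ξ ∈ Bad p := ⟨lt_trans hξ (hδL p), hno⟩
    exact absurd (csInf_le (OrderBot.bddBelow _) hmem) (not_le.mpr hξ)
  have hδgt : ∀ p ζ, ζ < lam.ord → ∀ x ∈ A ζ, p ≤ x → ζ < δ p := by
    intro p ζ hζ x hx hpx
    by_contra hle
    push_neg at hle
    obtain ⟨y, hy, hxy⟩ := href (δ p) ζ hle hζ x hx
    exact hδnone p y hy (le_trans hpx hxy)
  set g : Pinf → Ordinal.{0} → Pinf :=
    fun p ξ => if h : ∃ x ∈ A ξ, p ≤ x then h.choose else p with hgdef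
  have hgspec : ∀ p ξ, ξ < δ p → g p ξ ∈ A ξ ∧ p ≤ g p ξ := by
    intro p ξ hξ
    obtain ⟨x, hx, hpx⟩ := hδabove p ξ hξ
    have hex : ∃ x ∈ A ξ, p ≤ x := ⟨x, hx, hpx⟩
    simp only [hgdef]
    rw [dif_pos hex]
    exact ⟨hex.choose_spec.1, hex.choose_spec.2⟩
  have hgmem : ∀ p ξ, ξ < δ p → g p ξ ∈ A ξ := fun p ξ h => (hgspec p ξ h).1
  have hgab : ∀ p ξ, ξ < δ p → p ≤ g p ξ := fun p ξ h => (hgspec p ξ h).2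
  have hguniq : ∀ p ξ, ξ < δ p → ∀ x ∈ A ξ, p ≤ x → g p ξ = x := by
    intro p ξ hξ x hx hpx
    exact U ξ (lt_trans hξ (hδL p)) (g p ξ) (hgmem p ξ hξ) x hx p (hgab p ξ hξ) hpx
  have hgdec : ∀ p ξ η, ξ ≤ η → η < δ p → g p η ≤ g p ξ := by
    intro p ξ η hle hη
    have hξ : ξ < δ p := lt_of_le_of_lt hle hη
    obtain ⟨y, hy, hgy⟩ := href ξ η hle (lt_trans hη (hδL p)) (g p η) (hgmem p η hη)
    have heq : g p ξ = y := hguniq p ξ hξ y hy (le_trans (hgab p η hη) hgy)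
    rw [heq]
    exact hgy
  have hgcoh : ∀ p q ξ, q ≤ p → ξ < δ p → ξ < δ q ∧ g q ξ = g p ξ := by
    intro p q ξ hqp hξ
    have h1 : q ≤ g p ξ := le_trans hqp (hgab p ξ hξ)
    have h2 : ξ < δ q := hδgt q ξ (lt_trans hξ (hδL p)) (g p ξ) (hgmem p ξ hξ) h1
    exact ⟨h2, hguniq q ξ h2 (g p ξ) (hgmem p ξ hξ) h1⟩
  have hgself : ∀ p ζ, ζ < lam.ord → p ∈ A ζ → ζ < δ p ∧ g p ζ = p := by
    intro p ζ hζ hp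
    have h1 : ζ < δ p := hδgt p ζ hζ p hp (le_refl p)
    exact ⟨h1, hguniq p ζ h1 p hp (le_refl p)⟩
  have hξ₀δa : ξ₀ < δ a ∧ g a ξ₀ = a := hgself a ξ₀ hξ₀L haA
  -- suppose the conclusion fails
  by_contra hcon
  -- then every short branch through a can be extended
  have EXT : ∀ (s : Ordinal.{0}) (f : Ordinal.{0} → Pinf), s < lam.ord → IsBranch A s f →
      (∃ ξ, ξ < s ∧ f ξ = a) → ∃ c : Pinf, c ∈ A s ∧ ∀ ξ, ξ < s → c ≤ f ξ := by
    intro s f hsL hbr hthr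
    have hnotmax : ¬ IsMaximalBranch A lam.ord s f := by
      intro hm
      exact hcon ⟨s, f, hsL, hm, hthr⟩
    unfold IsMaximalBranch at hnotmax
    push_neg at hnotmax
    obtain ⟨s', f', hss', hs'L, hbr', hagree⟩ := hnotmax (le_of_lt hsL) hbr
    refine ⟨f' s, hbr'.1 s hss', ?_⟩
    intro ξ hξ
    have hle := hbr'.2 ξ s (le_of_lt hξ) hss'
    rwa [hagree ξ hξ] at hle
  -- witnesses for non-distributivity at 𝔥
  have hex : ∃ (ι : Type) (Bf : ι → Set Pinf), Cardinal.mk ι = hdist Pinf ∧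
      (∀ i, MaxAntichain (Bf i)) ∧
      ¬ ∃ C : Set Pinf, MaxAntichain C ∧ ∀ i, Refines C (Bf i) := by
    by_contra hno
    push_neg at hno
    exact Pinf.hdist_not_distributive (fun ι Bf hmk hBm => hno ι Bf hmk hBm)
  obtain ⟨ι, Bf, hmk, hBm, hBnoref⟩ := hex
  set Efam : ι → Set Pinf := fun i => {q : Pinf | ∃ b ∈ Bf i, q ≤ b} with hEfam
  have hEdense : ∀ i, ∀ r : Pinf, ∃ q : Pinf, q ≤ r ∧ q ∈ Efam i := by
    intro i r
    obtain ⟨b, hb, hcompat⟩ := (hBm i).2 r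
    obtain ⟨q, h1, h2⟩ := hcompat
    exact ⟨q, h1, ⟨b, hb, h2⟩⟩
  have hEdc : ∀ i, ∀ q q' : Pinf, q ≤ q' → q' ∈ Efam i → q ∈ Efam i := by
    rintro i q q' hle ⟨b, hb, hq'b⟩
    exact ⟨b, hb, le_trans hle hq'b⟩
  have hEbadex : ∃ p₀ : Pinf, ∀ q : Pinf, q ≤ p₀ → ∃ i, q ∉ Efam i := by
    obtain ⟨p₀, hp₀⟩ := Pinf.exists_bad_point Bf hBm hBnoref
    refine ⟨p₀, fun q hq => ?_⟩
    obtain ⟨i, hi⟩ := hp₀ q hq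
    refine ⟨i, ?_⟩
    rintro ⟨b, hb, hqb⟩
    exact hi b hb hqb
  obtain ⟨p₀, hp₀⟩ := hEbadex
  obtain ⟨E', hE'dc, hE'dense, hE'bad⟩ := Pinf.transfer a p₀ Efam hEdense hEdc hp₀
  -- index the family by ordinals below H = 𝔥.ord
  set H : Ordinal.{0} := (hdist Pinf).ord with hH
  have hmkH : Cardinal.mk H.ToType = Cardinal.mk ι := by
    rw [hH, Cardinal.mk_ord_toType, hmk]
  set en : ↥(Set.Iio H) ≃o H.ToType := Ordinal.ToType.mk (o := H) with hen
  set w : H.ToType ≃ ι := (Cardinal.eq.mp hmkH).some with hw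
  set E'' : Ordinal.{0} → Set Pinf :=
    fun j => if hj : j < H then E' (w (en ⟨j, hj⟩)) else Set.univ with hE''
  have hE''dc : ∀ j, ∀ q q' : Pinf, q ≤ a → q ≤ q' → q' ∈ E'' j → q ∈ E'' j := by
    intro j q q' hqa hle hmem
    by_cases hj : j < H
    · simp only [hE'', dif_pos hj] at hmem ⊢
      exact hE'dc _ q q' hqa hle hmem
    · simp only [hE'', dif_neg hj]
      trivial
  -- the recursion
  set step : ∀ i : Ordinal.{0}, (∀ j, j < i → Pinf) → Pinf := fun i prev =>
    if h : ∃ c : Pinf, c ≤ a ∧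
        (∀ j, ∀ hj : j < i, ∀ ξ, ξ < δ (prev j hj) → c ≤ g (prev j hj) ξ) ∧
        c ∈ E'' i ∧ ∃ ζ, ζ < lam.ord ∧ c ∈ A ζ
    then h.choose else a
    with hstep
  set qseq : Ordinal.{0} → Pinf := WellFounded.fix Ordinal.lt_wf step with hqseq
  have hqeq : ∀ i, qseq i = step i (fun j _ => qseq j) := by
    intro i
    rw [hqseq]
    exact WellFounded.fix_eq Ordinal.lt_wf step i
  set Q : Ordinal.{0} → Pinf → Prop := fun i c => c ≤ a ∧
      (∀ j, ∀ _ : j < i, ∀ ξ, ξ < δ (qseq j) → c ≤ g (qseq j) ξ) ∧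
      c ∈ E'' i ∧ ∃ ζ, ζ < lam.ord ∧ c ∈ A ζ
    with hQ
  have hchoose : ∀ i, (∃ c, Q i c) → Q i (qseq i) := by
    intro i hx
    rw [hqeq i]
    simp only [hQ] at hx ⊢
    simp only [hstep]
    rw [dif_pos hx]
    exact hx.choose_spec
  -- the main stage lemma
  have stage : ∀ i, i ≤ H → (∀ j, j < i → Q j (qseq j)) → ∃ c, Q i c := by
    intro i hiH hIH
    set s : Ordinal.{0} := max (δ a) (Ordinal.bsup i (fun j _ => δ (qseq j))) with hs
    have hδas : δ a ≤ s := le_max_left _ _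
    have hjs : ∀ j, j < i → δ (qseq j) ≤ s := fun j hj =>
      le_trans (Ordinal.le_bsup (fun j _ => δ (qseq j)) j hj) (le_max_right _ _)
    have hsL : s < lam.ord := by
      apply max_lt (hδL a)
      apply Ordinal.bsup_lt_ord ?_ (fun j _ => hδL (qseq j))
      rw [hreg.cof_eq]
      calc i.card ≤ H.card := Ordinal.card_le_card hiH
        _ = hdist Pinf := by rw [hH, Cardinal.card_ord]
        _ < lam := hgt
    -- coherence of the generated branches
    have hcohQ : ∀ j j', j < i → j' < i → ∀ ξ, ξ < δ (qseq j) → ξ < δ (qseq j') →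
        g (qseq j) ξ = g (qseq j') ξ := by
      have key : ∀ j j', j < j' → j' < i → ∀ ξ, ξ < δ (qseq j) → ξ < δ (qseq j') →
          g (qseq j) ξ = g (qseq j') ξ := by
        intro j j' hjj' hj'i ξ hξj hξj'
        have h2 := ((hIH j' hj'i).2.1) j hjj' ξ hξj
        have h3 := hgab (qseq j') ξ hξj'
        exact U ξ (lt_trans hξj (hδL _)) (g (qseq j) ξ) (hgmem _ _ hξj)
          (g (qseq j') ξ) (hgmem _ _ hξj') (qseq j') h2 h3
      intro j j' hj hj' ξ h1 h2
      rcases lt_trichotomy j j' with h | h | h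
      · exact key j j' h hj' ξ h1 h2
      · subst h; rfl
      · exact (key j' j h hj ξ h2 h1).symm
    have hcohA : ∀ j, j < i → ∀ ξ, ξ < δ (qseq j) → ξ < δ a → g (qseq j) ξ = g a ξ := by
      intro j hj ξ h1 h2
      exact (hgcoh a (qseq j) ξ (hIH j hj).1 h2).2
    -- the union branch
    set Fb : Ordinal.{0} → Pinf := fun ξ =>
      if h : ∃ j, j < i ∧ ξ < δ (qseq j) then g (qseq h.choose) ξ else g a ξ with hFb
    have hFeq : ∀ j, j < i → ∀ ξ, ξ < δ (qseq j) → Fb ξ = g (qseq j) ξ := by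
      intro j hj ξ hξ
      have hx : ∃ j', j' < i ∧ ξ < δ (qseq j') := ⟨j, hj, hξ⟩
      simp only [hFb]
      rw [dif_pos hx]
      exact hcohQ hx.choose j hx.choose_spec.1 hj ξ hx.choose_spec.2 hξ
    have hFeqa : ∀ ξ, ξ < δ a → Fb ξ = g a ξ := by
      intro ξ hξ
      by_cases hx : ∃ j', j' < i ∧ ξ < δ (qseq j')
      · simp only [hFb]
        rw [dif_pos hx]
        exact hcohA hx.choose hx.choose_spec.1 ξ hx.choose_spec.2 hξ
      · simp only [hFb]
        rw [dif_neg hx]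
    have hFlt : ∀ ξ, ξ < s → (∃ j, j < i ∧ ξ < δ (qseq j)) ∨ ξ < δ a := by
      intro ξ hξ
      by_cases hx : ∃ j', j' < i ∧ ξ < δ (qseq j')
      · exact Or.inl hx
      · right
        rcases lt_max_iff.mp hξ with h | h
        · exact h
        · obtain ⟨j, hj, hlt⟩ := (Ordinal.lt_bsup (fun j _ => δ (qseq j))).mp h
          exact absurd ⟨j, hj, hlt⟩ hx
    have hFmem : ∀ ξ, ξ < s → Fb ξ ∈ A ξ := by
      intro ξ hξ
      rcases hFlt ξ hξ with ⟨j, hj, hlt⟩ | h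
      · rw [hFeq j hj ξ hlt]; exact hgmem _ _ hlt
      · rw [hFeqa ξ h]; exact hgmem _ _ h
    have hFdec : ∀ ξ η, ξ ≤ η → η < s → Fb η ≤ Fb ξ := by
      intro ξ η hle hη
      rcases hFlt η hη with ⟨j, hj, hlt⟩ | h
      · have hξlt : ξ < δ (qseq j) := lt_of_le_of_lt hle hlt
        rw [hFeq j hj η hlt, hFeq j hj ξ hξlt]
        exact hgdec _ ξ η hle hlt
      · have hξa : ξ < δ a := lt_of_le_of_lt hle h
        rw [hFeqa η h, hFeqa ξ hξa]
        exact hgdec a ξ η hle h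
    have hbr : IsBranch A s Fb := ⟨hFmem, hFdec⟩
    have hξ₀s : ξ₀ < s := lt_of_lt_of_le hξ₀δa.1 hδas
    have hthr : ∃ ξ, ξ < s ∧ Fb ξ = a := by
      refine ⟨ξ₀, hξ₀s, ?_⟩
      rw [hFeqa ξ₀ hξ₀δa.1]
      exact hξ₀δa.2
    obtain ⟨c₀, hc₀A, hc₀le⟩ := EXT s Fb hsL hbr hthr
    have hc₀a : c₀ ≤ a := by
      have h := hc₀le ξ₀ hξ₀s
      rwa [hFeqa ξ₀ hξ₀δa.1, hξ₀δa.2] at h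
    have hrex : ∃ r : Pinf, r ≤ c₀ ∧ r ∈ E'' i := by
      by_cases hiH' : i < H
      · obtain ⟨q', hq'1, hq'2⟩ := hE'dense (w (en ⟨i, hiH'⟩)) c₀ hc₀a
        refine ⟨q', hq'1, ?_⟩
        simp only [hE'']
        rw [dif_pos hiH']
        exact hq'2
      · refine ⟨c₀, le_refl c₀, ?_⟩
        simp only [hE'']
        rw [dif_neg hiH']
        trivial
    obtain ⟨r, hrc₀, hrE⟩ := hrex
    obtain ⟨ζ, hζL, d, hdA, hdr⟩ := hdense r
    have hda : d ≤ a := le_trans hdr (le_trans hrc₀ hc₀a)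
    refine ⟨d, hda, ?_, ?_, ⟨ζ, hζL, hdA⟩⟩
    · intro j hj ξ hξ
      have h1 : ξ < s := lt_of_lt_of_le hξ (hjs j hj)
      have h2 := hc₀le ξ h1
      rw [hFeq j hj ξ hξ] at h2
      exact le_trans hdr (le_trans hrc₀ h2)
    · exact hE''dc i d r hda hdr hrE
  -- the invariant
  have invQ : ∀ i, i < H → Q i (qseq i) := by
    intro i
    induction i using Ordinal.induction with
    | h i IH =>
      intro hiH
      exact hchoose i (stage i (le_of_lt hiH) (fun j hj => IH j hj (lt_trans hj hiH)))
  -- the final contradiction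
  obtain ⟨c₁, hc₁a, hc₁g, -, -⟩ := stage H (le_refl H) (fun j hj => invQ j hj)
  have hc₁q : ∀ j, j < H → c₁ ≤ qseq j := by
    intro j hj
    obtain ⟨-, -, -, ζ, hζ, hqA⟩ := invQ j hj
    obtain ⟨hζδ, hgeq⟩ := hgself (qseq j) ζ hζ hqA
    have h := hc₁g j hj ζ hζδ
    rwa [hgeq] at h
  obtain ⟨i, hnotE⟩ := hE'bad c₁ hc₁a
  set x : ↥(Set.Iio H) := en.symm (w.symm i) with hx
  have hxH : x.1 < H := x.2
  have hwen : w (en ⟨x.1, hxH⟩) = i := by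
    have hxx : (⟨x.1, hxH⟩ : ↥(Set.Iio H)) = x := Subtype.ext rfl
    rw [hxx, hx, OrderIso.apply_symm_apply, Equiv.apply_symm_apply]
  obtain ⟨-, -, hqE, -⟩ := invQ x.1 hxH
  have hqE' : qseq x.1 ∈ E' i := by
    simp only [hE''] at hqE
    rw [dif_pos hxH] at hqE
    rwa [hwen] at hqE
  exact hnotE (hE'dc i c₁ (qseq x.1) hc₁a (hc₁q x.1 hxH) hqE')
end

section
/- Suppose that every strictly ⊆*-decreasing sequence of infinite subsets of ω of length strictly less than 𝔥 has an infinite pseudo-intersection (i.e., there are no towers of length < 𝔥; this holds iff 𝔱 = 𝔥). Then every maximal branch of every distributivity matrix for ℙ_ω of height 𝔥 is cofinal. -/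
universe u

/-- If every strictly `⊆*`-decreasing sequence of infinite subsets
of `ω` of length `< 𝔥` has an infinite pseudo-intersection (i.e. there are no
towers of length `< 𝔥`), then every maximal branch of every distributivity matrix
for `ℙ_ω` of height `𝔥` is cofinal. -/
theorem no_short_towers_all_maximal_branches_cofinal
    (htow : ∀ (δ : Ordinal.{0}) (f : Ordinal.{0} → Pinf), δ < (hdist Pinf).ord →
      (∀ i j : Ordinal.{0}, i < j → j < δ → f j < f i) →
      ∃ b : Pinf, ∀ i, i < δ → b ≤ f i) :
    ∀ (A : Ordinal.{0} → Set Pinf), IsDistribMatrix Pinf (hdist Pinf).ord A →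
      ∀ (δ : Ordinal.{0}) (f : Ordinal.{0} → Pinf),
        IsMaximalBranch A (hdist Pinf).ord δ f → δ = (hdist Pinf).ord := by
  intro A hA δ f hmax
  obtain ⟨hδle, hbr, hnoext⟩ := hmax
  by_contra hne
  have hδlt : δ < (hdist Pinf).ord := lt_of_le_of_ne hδle hne
  have hbdd : ∀ T : Set Ordinal.{0}, BddBelow T := fun T => ⟨0, fun y _ => zero_le⟩
  -- Step 1: find a pseudo-intersection b of the branch
  have hbex : ∃ b : Pinf, ∀ ξ, ξ < δ → b ≤ f ξ := by
    -- S: stages of strict decrease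
    set S : Set Ordinal.{0} := {ξ | ξ < δ ∧ ∀ η, η < ξ → ¬ f η ≤ f ξ} with hS
    set S' : Set Ordinal.{0} := S ∪ Set.Ici δ with hS'
    have hub : ¬ BddAbove S' := by
      rintro ⟨x, hx⟩
      have h1 : Order.succ x ⊔ δ ∈ S' := Or.inr (Set.mem_Ici.2 (le_max_right _ _))
      exact absurd (le_sup_left.trans (hx h1)) (not_le.2 (Order.lt_succ x))
    set e := Ordinal.enumOrd S' with he
    have hmemδ : δ ∈ {ι : Ordinal.{0} | δ ≤ e ι} := Ordinal.le_enumOrd_self hub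
    set δ' := sInf {ι : Ordinal.{0} | δ ≤ e ι} with hδ'
    have hδ'mem : δ ≤ e δ' := csInf_mem ⟨δ, hmemδ⟩
    have hδ'le : δ' ≤ δ := csInf_le (hbdd _) hmemδ
    have hlt : ∀ ι, ι < δ' → e ι ∈ S := by
      intro ι hι
      rcases Ordinal.enumOrd_mem hub ι with h1 | h1
      · exact h1
      · have h2 : δ' ≤ ι := csInf_le (hbdd _) (show ι ∈ {ι : Ordinal.{0} | δ ≤ e ι} from h1)
        exact absurd h2 (not_le.2 hι)
    have hdec : ∀ i j : Ordinal.{0}, i < j → j < δ' → f (e j) < f (e i) := by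
      intro i j hij hjδ'
      have hi : e i ∈ S := hlt i (hij.trans hjδ')
      have hj : e j ∈ S := hlt j hjδ'
      have heij : e i < e j := Ordinal.enumOrd_strictMono hub hij
      exact lt_of_le_not_ge (hbr.2 (e i) (e j) heij.le hj.1) (hj.2 (e i) heij)
    obtain ⟨b, hbb⟩ := htow δ' (fun ι => f (e ι)) (lt_of_le_of_lt hδ'le hδlt) hdec
    -- b is below every element of the branch
    refine ⟨b, fun ξ hξ => ?_⟩
    set M : Set Ordinal.{0} := {η | η ≤ ξ ∧ f η ≤ f ξ} with hM
    have hMne : M.Nonempty := ⟨ξ, le_refl _, le_refl _⟩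
    set m := sInf M with hm
    have hmM : m ∈ M := csInf_mem hMne
    have hmS : m ∈ S := by
      refine ⟨lt_of_le_of_lt hmM.1 hξ, fun η hη hle => ?_⟩
      have : η ∈ M := ⟨le_trans hη.le hmM.1, le_trans hle hmM.2⟩
      exact absurd (csInf_le (hbdd _) this) (not_le.2 hη)
    obtain ⟨ι, hι⟩ : ∃ ι, e ι = m := by
      have : m ∈ Set.range e := by rw [Ordinal.range_enumOrd hub]; exact Or.inl hmS
      exact this
    have hιδ' : ι < δ' := by
      by_contra h
      push_neg at h
      have h2 : e δ' ≤ e ι := (Ordinal.enumOrd_strictMono hub).monotone h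
      rw [hι] at h2
      exact absurd (((hδ'mem.trans h2).trans hmM.1).trans_lt hξ) (lt_irrefl δ)
    calc b ≤ f (e ι) := hbb ι hιδ'
      _ = f m := by rw [hι]
      _ ≤ f ξ := hmM.2
  obtain ⟨b, hb⟩ := hbex
  -- Step 2: extend the branch using the antichain at level δ
  obtain ⟨hmac, hrefine, _⟩ := hA
  obtain ⟨a, haA, c, hca, hcb⟩ := (hmac δ hδlt).2 b
  have haf : ∀ ξ, ξ < δ → a ≤ f ξ := by
    intro ξ hξ
    obtain ⟨a', ha'A, haa'⟩ := hrefine ξ δ hξ.le hδlt a haA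
    have hcompat : Compat a' (f ξ) := ⟨c, le_trans hcb haa', le_trans hca (hb ξ hξ)⟩
    have heq : a' = f ξ := by
      by_contra hne'
      exact (hmac ξ (hξ.trans hδlt)).1 a' ha'A (f ξ) (hbr.1 ξ hξ) hne' hcompat
    rw [← heq]; exact haa'
  -- the extended branch contradicts maximality
  refine hnoext ⟨δ + 1, fun ξ => if ξ = δ then a else f ξ,
      (Ordinal.add_one_eq_succ δ) ▸ Order.lt_succ δ, ?_, ⟨?_, ?_⟩, ?_⟩
  · rw [Ordinal.add_one_eq_succ]
    exact Order.succ_le_of_lt hδlt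
  · intro ξ hξ
    rw [Ordinal.add_one_eq_succ, Order.lt_succ_iff] at hξ
    show (if ξ = δ then a else f ξ) ∈ A ξ
    rcases lt_or_eq_of_le hξ with h | h
    · rw [if_neg h.ne]; exact hbr.1 ξ h
    · rw [if_pos h, h]; exact haA
  · intro ξ η hξη hη
    rw [Ordinal.add_one_eq_succ, Order.lt_succ_iff] at hη
    show (if η = δ then a else f η) ≤ (if ξ = δ then a else f ξ)
    rcases lt_or_eq_of_le hη with h | h
    · rw [if_neg h.ne, if_neg (hξη.trans_lt h).ne]
      exact hbr.2 ξ η hξη h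
    · subst h
      rw [if_pos rfl]
      rcases lt_or_eq_of_le hξη with h | h
      · rw [if_neg h.ne]; exact haf ξ h
      · rw [if_pos h]
  · intro ξ hξ
    show (if ξ = δ then a else f ξ) = f ξ
    rw [if_neg hξ.ne]
end
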